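/- Let A, B ⊆ X be disjoint and nonempty, and set K(A,B) = {η ∈ X : Φ(η,A) ≤ Φ(η,B)}. If η ∈ K(A,B), η' ∈ X ∖ K(A,B) and η ∼ η', then (1) H(η') < H(η), and (2) H(η) ≥ Φ(A,B). -/

import Mathlib

open scoped Classical

variable {X : Type*}

/-- `ω` (restricted to 0,…,L) is a path of allowed moves from `a` to `b`. -/
def IsPathW (rel : X → X → Prop) (a b : X) (L : ℕ) (ω : ℕ → X) : Prop :=
  ω 0 = a ∧ ω L = b ∧ ∀ i < L, rel (ω i) (ω (i + 1))

/-- The maximal energy along the path `ω = (ω 0, …, ω L)`. -/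
noncomputable def pathMax (H : X → ℝ) (L : ℕ) (ω : ℕ → X) : ℝ :=
  (Finset.range (L + 1)).sup' ⟨0, Finset.mem_range.mpr (Nat.succ_pos L)⟩ fun i => H (ω i)

/-- Communication height Φ(a,b) between two configurations. -/
noncomputable def commH (rel : X → X → Prop) (H : X → ℝ) (a b : X) : ℝ :=
  sInf { m : ℝ | ∃ L ω, IsPathW rel a b L ω ∧ m = pathMax H L ω }

/-- Communication height Φ(A,B) between two sets of configurations. -/
noncomputable def commHS (rel : X → X → Prop) (H : X → ℝ) (A B : Set X) : ℝ :=
  sInf { m : ℝ | ∃ a ∈ A, ∃ b ∈ B, m = commH rel H a b }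

/-- The graph (X,∼) is connected. -/
def ConnGraph (rel : X → X → Prop) : Prop :=
  ∀ a b : X, ∃ L ω, IsPathW rel a b L ω

section Aux
variable [Fintype X] (rel : X → X → Prop) (H : X → ℝ)

lemma pathMax_mem_range (L : ℕ) (ω : ℕ → X) : pathMax H L ω ∈ Set.range H := by
  obtain ⟨i, _, h⟩ := Finset.exists_mem_eq_sup' (Finset.nonempty_range_add_one (n := L))
    (fun i => H (ω i))
  exact ⟨ω i, h.symm⟩

lemma le_pathMax (L : ℕ) (ω : ℕ → X) {i : ℕ} (hi : i ≤ L) : H (ω i) ≤ pathMax H L ω :=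
  Finset.le_sup' (fun i => H (ω i)) (Finset.mem_range.2 (Nat.lt_succ_of_le hi))

lemma commH_set_sub (a b : X) :
    { m : ℝ | ∃ L ω, IsPathW rel a b L ω ∧ m = pathMax H L ω } ⊆ Set.range H := by
  rintro m ⟨L, ω, _, rfl⟩; exact pathMax_mem_range H L ω

lemma commH_set_finite (a b : X) :
    { m : ℝ | ∃ L ω, IsPathW rel a b L ω ∧ m = pathMax H L ω }.Finite :=
  (Set.finite_range H).subset (commH_set_sub rel H a b)

lemma commH_le {a b : X} {L : ℕ} {ω : ℕ → X} (h : IsPathW rel a b L ω) :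
    commH rel H a b ≤ pathMax H L ω :=
  csInf_le (commH_set_finite rel H a b).bddBelow ⟨L, ω, h, rfl⟩

lemma commH_exists (hconn : ConnGraph rel) (a b : X) :
    ∃ L ω, IsPathW rel a b L ω ∧ commH rel H a b = pathMax H L ω := by
  have hne : { m : ℝ | ∃ L ω, IsPathW rel a b L ω ∧ m = pathMax H L ω }.Nonempty := by
    obtain ⟨L, ω, h⟩ := hconn a b
    exact ⟨_, L, ω, h, rfl⟩
  exact hne.csInf_mem (commH_set_finite rel H a b)

lemma commH_mem_range (hconn : ConnGraph rel) (a b : X) : commH rel H a b ∈ Set.range H := by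
  obtain ⟨L, ω, _, h⟩ := commH_exists rel H hconn a b
  exact h ▸ pathMax_mem_range H L ω

lemma H_le_commH (hconn : ConnGraph rel) (a b : X) : H a ≤ commH rel H a b := by
  obtain ⟨L, ω, ⟨h0, _, _⟩, h⟩ := commH_exists rel H hconn a b
  rw [h, ← h0]
  exact le_pathMax H L ω (Nat.zero_le L)

lemma commH_symm_le (hsymm : Symmetric rel) (hconn : ConnGraph rel) (a b : X) :
    commH rel H a b ≤ commH rel H b a := by
  obtain ⟨L, ω, ⟨h0, hL, hstep⟩, h⟩ := commH_exists rel H hconn b a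
  have hp : IsPathW rel a b L (fun i => ω (L - i)) := by
    refine ⟨by simpa using hL, by simpa using h0, fun i hi => ?_⟩
    have h1 : L - (i + 1) < L := by omega
    have h2 : L - (i + 1) + 1 = L - i := by omega
    have := hstep _ h1
    rw [h2] at this
    exact hsymm this
  calc commH rel H a b ≤ pathMax H L (fun i => ω (L - i)) := commH_le rel H hp
    _ ≤ pathMax H L ω := by
        apply Finset.sup'_le
        intro i hi
        exact le_pathMax H L ω (Nat.sub_le L i)
    _ = commH rel H b a := h.symm

lemma commH_symm (hsymm : Symmetric rel) (hconn : ConnGraph rel) (a b : X) :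
    commH rel H a b = commH rel H b a :=
  le_antisymm (commH_symm_le rel H hsymm hconn a b) (commH_symm_le rel H hsymm hconn b a)

lemma commH_prepend (hconn : ConnGraph rel) {a a' : X} (b : X) (h : rel a a') :
    commH rel H a b ≤ max (H a) (commH rel H a' b) := by
  obtain ⟨L, ω, ⟨h0, hL, hstep⟩, hmax⟩ := commH_exists rel H hconn a' b
  set ω' : ℕ → X := fun i => if i = 0 then a else ω (i - 1) with hω'
  have hp : IsPathW rel a b (L + 1) ω' := by
    refine ⟨by simp [hω'], by simp [hω', hL], fun i hi => ?_⟩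
    rcases Nat.eq_zero_or_pos i with h1 | h1
    · subst h1; simpa [hω', h0] using h
    · have : i - 1 < L := by omega
      have := hstep _ this
      have hne : i ≠ 0 := by omega
      have e1 : ω' i = ω (i - 1) := by simp [hω', hne]
      have e2 : ω' (i + 1) = ω i := by simp [hω']
      rw [e1, e2]
      simpa [Nat.sub_add_cancel h1] using this
  calc commH rel H a b ≤ pathMax H (L + 1) ω' := commH_le rel H hp
    _ ≤ max (H a) (commH rel H a' b) := by
        apply Finset.sup'_le
        intro i hi
        rcases Nat.eq_zero_or_pos i with h1 | h1
        · subst h1; simp [hω']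
        · have hne : i ≠ 0 := by omega
          have e1 : ω' i = ω (i - 1) := by simp [hω', hne]
          rw [e1, hmax]
          have : i - 1 ≤ L := by
            have := Finset.mem_range.1 hi; omega
          exact le_max_of_le_right (le_pathMax H L ω this)

lemma commH_triangle (hconn : ConnGraph rel) (a b c : X) :
    commH rel H a c ≤ max (commH rel H a b) (commH rel H b c) := by
  obtain ⟨L1, ω1, ⟨h10, h1L, h1s⟩, e1⟩ := commH_exists rel H hconn a b
  obtain ⟨L2, ω2, ⟨h20, h2L, h2s⟩, e2⟩ := commH_exists rel H hconn b c
  set ω : ℕ → X := fun i => if i ≤ L1 then ω1 i else ω2 (i - L1) with hω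
  have hp : IsPathW rel a c (L1 + L2) ω := by
    refine ⟨by simp [hω, h10], ?_, fun i hi => ?_⟩
    · rcases Nat.eq_zero_or_pos L2 with h | h
      · subst h; simp [hω, h1L, ← h2L, ← h20]
      · have : ¬ (L1 + L2 ≤ L1) := by omega
        simp [hω, this, h2L]
    · rcases Nat.lt_or_ge i L1 with h1 | h1
      · have ha : i ≤ L1 := h1.le
        have hb : i + 1 ≤ L1 := h1
        simpa [hω, ha, hb] using h1s i h1
      · rcases Nat.eq_or_lt_of_le h1 with h2 | h2
        · have hb : ¬ (i + 1 ≤ L1) := by omega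
          have hL2 : 0 < L2 := by omega
          have e : i + 1 - L1 = 1 := by omega
          simp only [hω, ← h2, le_refl, if_pos, hb, if_neg, not_false_iff, e, h1L, ← h20]
          simpa [← h2, e] using h2s 0 hL2
        · have ha : ¬ (i ≤ L1) := by omega
          have hb : ¬ (i + 1 ≤ L1) := by omega
          have hc : i - L1 < L2 := by omega
          have e : i + 1 - L1 = i - L1 + 1 := by omega
          simp only [hω, ha, hb, if_neg, not_false_iff, e]
          exact h2s _ hc
  calc commH rel H a c ≤ pathMax H (L1 + L2) ω := commH_le rel H hp
    _ ≤ max (commH rel H a b) (commH rel H b c) := by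
        apply Finset.sup'_le
        intro i hi
        rcases le_or_gt i L1 with h1 | h1
        · simp only [hω, h1, if_pos]
          exact le_max_of_le_left (e1 ▸ le_pathMax H L1 ω1 h1)
        · have ha : ¬ (i ≤ L1) := by omega
          have hc : i - L1 ≤ L2 := by
            have := Finset.mem_range.1 hi; omega
          simp only [hω, ha, if_neg, not_false_iff]
          exact le_max_of_le_right (e2 ▸ le_pathMax H L2 ω2 hc)

lemma commHS_set_sub (hconn : ConnGraph rel) (A B : Set X) :
    { m : ℝ | ∃ a ∈ A, ∃ b ∈ B, m = commH rel H a b } ⊆ Set.range H := by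
  rintro m ⟨a, _, b, _, rfl⟩
  exact commH_mem_range rel H hconn a b

lemma commHS_set_finite (hconn : ConnGraph rel) (A B : Set X) :
    { m : ℝ | ∃ a ∈ A, ∃ b ∈ B, m = commH rel H a b }.Finite :=
  (Set.finite_range H).subset (commHS_set_sub rel H hconn A B)

lemma commHS_le (hconn : ConnGraph rel) {A B : Set X} {a b : X} (ha : a ∈ A) (hb : b ∈ B) :
    commHS rel H A B ≤ commH rel H a b :=
  csInf_le (commHS_set_finite rel H hconn A B).bddBelow ⟨a, ha, b, hb, rfl⟩

lemma commHS_exists (hconn : ConnGraph rel) {A B : Set X} (hA : A.Nonempty) (hB : B.Nonempty) :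
    ∃ a ∈ A, ∃ b ∈ B, commHS rel H A B = commH rel H a b := by
  have hne : { m : ℝ | ∃ a ∈ A, ∃ b ∈ B, m = commH rel H a b }.Nonempty := by
    obtain ⟨a, ha⟩ := hA; obtain ⟨b, hb⟩ := hB
    exact ⟨_, a, ha, b, hb, rfl⟩
  exact hne.csInf_mem (commHS_set_finite rel H hconn A B)

lemma commHS_singleton_exists (hconn : ConnGraph rel) {A : Set X} (hA : A.Nonempty) (σ : X) :
    ∃ a ∈ A, commHS rel H {σ} A = commH rel H σ a := by
  obtain ⟨x, hx, a, ha, h⟩ := commHS_exists rel H hconn (Set.singleton_nonempty σ) hA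
  rw [Set.mem_singleton_iff] at hx
  exact ⟨a, ha, hx ▸ h⟩

lemma H_le_commHS_singleton (hconn : ConnGraph rel) {A : Set X} (hA : A.Nonempty) (σ : X) :
    H σ ≤ commHS rel H {σ} A := by
  obtain ⟨a, _, h⟩ := commHS_singleton_exists rel H hconn hA σ
  exact h ▸ H_le_commH rel H hconn σ a

end Aux

/-- with K(A,B) = {η : Φ(η,A) ≤ Φ(η,B)}, if η ∈ K(A,B),
η' ∉ K(A,B) and η ∼ η', then H(η') < H(η) and H(η) ≥ Φ(A,B). -/
theorem stmt_12 [Fintype X] (rel : X → X → Prop) (H : X → ℝ)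
    (hsymm : Symmetric rel) (hconn : ConnGraph rel)
    (A B : Set X) (hA : A.Nonempty) (hB : B.Nonempty) (hAB : Disjoint A B)
    (η η' : X)
    (hη : η ∈ {σ : X | commHS rel H {σ} A ≤ commHS rel H {σ} B})
    (hη' : η' ∉ {σ : X | commHS rel H {σ} A ≤ commHS rel H {σ} B})
    (hrel : rel η η') :
    H η' < H η ∧ commHS rel H A B ≤ H η := by
  simp only [Set.mem_setOf_eq] at hη hη'
  rw [not_le] at hη'
  have hrel' := hsymm hrel
  have h1 : commHS rel H {η'} A ≤ max (H η') (commHS rel H {η} A) := by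
    obtain ⟨a, ha, e⟩ := commHS_singleton_exists rel H hconn hA η
    calc commHS rel H {η'} A ≤ commH rel H η' a :=
          commHS_le rel H hconn (Set.mem_singleton η') ha
      _ ≤ max (H η') (commH rel H η a) := commH_prepend rel H hconn a hrel'
      _ = max (H η') (commHS rel H {η} A) := by rw [e]
  have h2 : commHS rel H {η} B ≤ max (H η) (commHS rel H {η'} B) := by
    obtain ⟨b, hb, e⟩ := commHS_singleton_exists rel H hconn hB η'
    calc commHS rel H {η} B ≤ commH rel H η b :=
          commHS_le rel H hconn (Set.mem_singleton η) hb
      _ ≤ max (H η) (commH rel H η' b) := commH_prepend rel H hconn b hrel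
      _ = max (H η) (commHS rel H {η'} B) := by rw [e]
  have hy : H η' ≤ commHS rel H {η'} B := H_le_commHS_singleton rel H hconn hB η'
  have part1 : H η' < H η := by
    by_contra hc
    rw [not_lt] at hc
    have hvq : commHS rel H {η} B ≤ commHS rel H {η'} B :=
      h2.trans (max_le (hc.trans hy) le_rfl)
    exact absurd (h1.trans (max_le hy (le_trans hη hvq))) (not_le.2 hη')
  have hq : commHS rel H {η'} B < H η := by
    by_contra hc
    rw [not_lt] at hc
    have : commHS rel H {η'} A ≤ commHS rel H {η'} B :=
      h1.trans (max_le hy (hη.trans (h2.trans (max_le hc le_rfl))))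
    exact absurd this (not_le.2 hη')
  have hv : commHS rel H {η} B ≤ H η := h2.trans (max_le le_rfl hq.le)
  have hu : commHS rel H {η} A ≤ H η := hη.trans hv
  refine ⟨part1, ?_⟩
  obtain ⟨a, ha, ea⟩ := commHS_singleton_exists rel H hconn hA η
  obtain ⟨b, hb, eb⟩ := commHS_singleton_exists rel H hconn hB η
  calc commHS rel H A B ≤ commH rel H a b := commHS_le rel H hconn ha hb
    _ ≤ max (commH rel H a η) (commH rel H η b) := commH_triangle rel H hconn a η b
    _ = max (commH rel H η a) (commH rel H η b) := by
        rw [commH_symm rel H hsymm hconn a η]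
    _ ≤ H η := max_le (ea ▸ hu) (eb ▸ hv)
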